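/- Let K be a global function field of characteristic p, R a coordinate ring of K, v a height-one prime of R, and K_v the v-adic completion of K. If b ∈ K and the image of b in K_v is a p-th power in K_v, then b is a p-th power in K. -/

import Mathlib

open IsDedekindDomain
open scoped Multiplicative
set_option synthInstance.maxHeartbeats 1000000
set_option maxHeartbeats 1600000

-- helper: finrank version of Algebra.rank_eq_of_equiv_equiv
theorem myFinrankEq {R S R' S' : Type} [CommRing R] [CommRing S] [Algebra R S]
    [CommRing R'] [CommRing S'] [Algebra R' S'] (i : R ≃+* R') (j : S ≃+* S')
    (hc : (algebraMap R' S').comp i.toRingHom = j.toRingHom.comp (algebraMap R S)) :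
    Module.finrank R S = Module.finrank R' S' := by
  simp only [Module.finrank, Algebra.rank_eq_of_equiv_equiv i j hc]

-- ring equiv onto field range
noncomputable def myFieldRangeEquiv {K L : Type} [Field K] [Field L] (f : K →+* L) :
    K ≃+* f.fieldRange :=
  RingEquiv.ofBijective f.rangeRestrictField
    ⟨fun a b h => f.injective (congrArg Subtype.val h),
     fun y => by obtain ⟨x, hx⟩ := y.2; exact ⟨x, Subtype.ext hx⟩⟩

@[simp] lemma myFieldRangeEquiv_apply {K L : Type} [Field K] [Field L] (f : K →+* L) (x : K) :
    (myFieldRangeEquiv f x : L) = f x := rfl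


-- invariance of [L : L^p] under finite extensions
lemma frob_finrank_eq (p : ℕ) (F L : Type) [Field F] [Field L] [Algebra F L]
    [FiniteDimensional F L] [ExpChar F p] [ExpChar L p] :
    Module.finrank (frobenius L p).fieldRange L = Module.finrank (frobenius F p).fieldRange F := by
  set A := (algebraMap F L).fieldRange with hA
  set E := (frobenius L p).fieldRange with hE
  set B := ((frobenius L p).comp (algebraMap F L)).fieldRange with hB
  have hBA : B ≤ A := by
    rintro x ⟨y, rfl⟩
    refine ⟨frobenius F p y, ?_⟩
    rw [RingHom.comp_apply, (algebraMap F L).map_frobenius]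
  have hBE : B ≤ E := by
    rintro x ⟨y, rfl⟩
    exact ⟨algebraMap F L y, rfl⟩
  letI : Algebra B A := (Subfield.inclusion hBA).toAlgebra
  letI : Algebra B E := (Subfield.inclusion hBE).toAlgebra
  haveI : IsScalarTower B A L := IsScalarTower.of_algebraMap_eq fun x => rfl
  haveI : IsScalarTower B E L := IsScalarTower.of_algebraMap_eq fun x => rfl
  have h1 : Module.finrank B A * Module.finrank A L = Module.finrank B L :=
    Module.finrank_mul_finrank B A L
  have h2 : Module.finrank B E * Module.finrank E L = Module.finrank B L :=
    Module.finrank_mul_finrank B E L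
  have hAL : Module.finrank F L = Module.finrank A L :=
    myFinrankEq (myFieldRangeEquiv (algebraMap F L)) (RingEquiv.refl L) (by ext x; rfl)
  have hBE2 : Module.finrank F L = Module.finrank B E :=
    myFinrankEq (myFieldRangeEquiv ((frobenius L p).comp (algebraMap F L)))
      (myFieldRangeEquiv (frobenius L p)) (by ext x; rfl)
  have hBA2 : Module.finrank (frobenius F p).fieldRange F = Module.finrank B A := by
    refine myFinrankEq ((myFieldRangeEquiv (frobenius F p)).symm.trans
      (myFieldRangeEquiv ((frobenius L p).comp (algebraMap F L))))
      (myFieldRangeEquiv (algebraMap F L)) ?_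
    apply RingHom.ext; intro z
    apply Subtype.ext
    have hz : frobenius F p ((myFieldRangeEquiv (frobenius F p)).symm z) = (z : F) :=
      congrArg Subtype.val ((myFieldRangeEquiv (frobenius F p)).apply_symm_apply z)
    show (frobenius L p) (algebraMap F L ((myFieldRangeEquiv (frobenius F p)).symm z))
        = algebraMap F L (z : F)
    rw [← hz, (algebraMap F L).map_frobenius]
  have hn : 0 < Module.finrank F L := Module.finrank_pos
  rw [hBA2]
  apply Nat.eq_of_mul_eq_mul_left hn
  calc Module.finrank F L * Module.finrank E L
      = Module.finrank B E * Module.finrank E L := by rw [← hBE2]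
    _ = Module.finrank B A * Module.finrank A L := h2.trans h1.symm
    _ = Module.finrank F L * Module.finrank B A := by rw [← hAL, mul_comm]

lemma ratfunc_frob_finrank (p : ℕ) (hp : p.Prime) (Fq : Type) [Field Fq] [Fintype Fq]
    [CharP Fq p] [ExpChar (RatFunc Fq) p] :
    Module.finrank (frobenius (RatFunc Fq) p).fieldRange (RatFunc Fq) = p := by
  haveI : Fact p.Prime := ⟨hp⟩
  set E := (frobenius (RatFunc Fq) p).fieldRange with hE
  -- X is not a p-th power
  have hX : ∀ g : RatFunc Fq, g ^ p ≠ RatFunc.X := by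
    intro g hg
    have hg0 : g ≠ 0 := by
      rintro rfl
      rw [zero_pow hp.ne_zero] at hg
      exact RatFunc.X_ne_zero hg.symm
    have hdeg : ∀ n : ℕ, (g ^ n).intDegree = n * g.intDegree := by
      intro n
      induction n with
      | zero => simpa using RatFunc.intDegree_one
      | succ n ih =>
          rw [pow_succ, RatFunc.intDegree_mul (pow_ne_zero n hg0) hg0, ih]
          push_cast; ring
    have h1 : (1 : ℤ) = p * g.intDegree := by
      rw [← RatFunc.intDegree_X (K := Fq), ← hg, hdeg]
    have : (p : ℤ) ∣ 1 := ⟨g.intDegree, h1⟩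
    have : (p : ℕ) ∣ 1 := by exact_mod_cast Int.natCast_dvd_natCast.mp (by exact_mod_cast this)
    exact hp.ne_one (Nat.dvd_one.mp this)
  -- the element X^p of E
  have hXpE : (RatFunc.X : RatFunc Fq) ^ p ∈ E := ⟨RatFunc.X, rfl⟩
  set xp : E := ⟨(RatFunc.X : RatFunc Fq) ^ p, hXpE⟩ with hxp
  have hmonic : (Polynomial.X ^ p - Polynomial.C xp).Monic :=
    Polynomial.monic_X_pow_sub_C xp hp.ne_zero
  have haeval :
      Polynomial.aeval (RatFunc.X : RatFunc Fq) (Polynomial.X ^ p - Polynomial.C xp) = 0 := by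
    rw [map_sub, map_pow, Polynomial.aeval_X, Polynomial.aeval_C]
    exact sub_self _
  have hirr : Irreducible (Polynomial.X ^ p - Polynomial.C xp) := by
    apply X_pow_sub_C_irreducible_of_prime hp
    intro c hc
    obtain ⟨d, hd⟩ := c.2
    apply hX d
    have hval : (c : RatFunc Fq) ^ p = (RatFunc.X : RatFunc Fq) ^ p := congrArg Subtype.val hc
    have hcX : (c : RatFunc Fq) = RatFunc.X := frobenius_inj (RatFunc Fq) p hval
    rw [← hcX, ← hd]
    rfl
  have hint : IsIntegral E (RatFunc.X : RatFunc Fq) :=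
    ⟨_, hmonic, by rw [← Polynomial.aeval_def]; exact haeval⟩
  have hET : ∀ z : RatFunc Fq, z ∈ E →
      z ∈ IntermediateField.adjoin E {(RatFunc.X : RatFunc Fq)} := fun z hz =>
    (IntermediateField.adjoin E {(RatFunc.X : RatFunc Fq)}).algebraMap_mem ⟨z, hz⟩
  have hXT : (RatFunc.X : RatFunc Fq) ∈ IntermediateField.adjoin E {(RatFunc.X : RatFunc Fq)} :=
    IntermediateField.subset_adjoin E _ rfl
  have hTop : IntermediateField.adjoin E {(RatFunc.X : RatFunc Fq)} = ⊤ := by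
    rw [eq_top_iff]
    intro x _
    have hC : ∀ a : Fq, algebraMap (Polynomial Fq) (RatFunc Fq) (Polynomial.C a) ∈
        IntermediateField.adjoin E {(RatFunc.X : RatFunc Fq)} := by
      intro a
      obtain ⟨d, hd⟩ := surjective_frobenius Fq p a
      apply hET
      refine ⟨algebraMap (Polynomial Fq) (RatFunc Fq) (Polynomial.C d), ?_⟩
      rw [frobenius_def, ← map_pow, ← Polynomial.C_pow]
      rw [show d ^ p = a from hd]
    have hpoly : ∀ q : Polynomial Fq, algebraMap (Polynomial Fq) (RatFunc Fq) q ∈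
        IntermediateField.adjoin E {(RatFunc.X : RatFunc Fq)} := by
      intro q
      induction q using Polynomial.induction_on with
      | C a => exact hC a
      | add f g hf hg => rw [map_add]; exact add_mem hf hg
      | monomial n a _ =>
          rw [map_mul, map_pow, RatFunc.algebraMap_X]
          exact mul_mem (hC a) (pow_mem hXT _)
    rw [← RatFunc.num_div_denom x]
    exact div_mem (hpoly _) (hpoly _)
  have hfr := IntermediateField.adjoin.finrank hint
  have hmin : Polynomial.X ^ p - Polynomial.C xp = minpoly E (RatFunc.X : RatFunc Fq) :=
    minpoly.eq_of_irreducible_of_monic hirr haeval hmonic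
  rw [← hmin, Polynomial.natDegree_X_pow_sub_C, hTop, IntermediateField.finrank_top'] at hfr
  exact hfr


def subfieldToIF {K : Type} [Field K] (E M : Subfield K) (h : E ≤ M) : IntermediateField E K where
  carrier := M
  mul_mem' := fun ha hb => M.mul_mem ha hb
  one_mem' := M.one_mem
  add_mem' := fun ha hb => M.add_mem ha hb
  zero_mem' := M.zero_mem
  algebraMap_mem' := fun e => h e.2
  inv_mem' := fun x hx => M.inv_mem hx

/-- Let `K` be a global function field of characteristic `p`, `R` a coordinate ring of `K`,
`v` a height-one prime of `R` and `K_v` the `v`-adic completion of `K`. If `b ∈ K` becomes a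
`p`-th power in `K_v`, then `b` is already a `p`-th power in `K`. -/
theorem pow_p_of_adicCompletion_pow_p
    (p : ℕ) (hp : p.Prime)
    (Fq K : Type) [Field Fq] [Fintype Fq] [Field K]
    [Algebra (RatFunc Fq) K] [FunctionField Fq K] [CharP K p]
    (R : Type) [CommRing R] [IsDedekindDomain R] [Algebra R K] [IsFractionRing R K]
    [Algebra Fq R] [Algebra Fq K] [IsScalarTower Fq R K] [Algebra.FiniteType Fq R]
    (v : HeightOneSpectrum R)
    (b : K) (h : ∃ y : v.adicCompletion K, algebraMap K (v.adicCompletion K) b = y ^ p) :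
    ∃ c : K, b = c ^ p := by
  haveI : Fact p.Prime := ⟨hp⟩
  obtain ⟨y, hy⟩ := h
  haveI : CharP (v.adicCompletion K) p :=
    charP_of_injective_ringHom (algebraMap K (v.adicCompletion K)).injective p
  set E := (frobenius K p).fieldRange with hEdef
  set M : Subfield K := ((frobenius (v.adicCompletion K) p).fieldRange).comap
      (algebraMap K (v.adicCompletion K)) with hMdef
  have hEM : E ≤ M := by
    rintro x ⟨z, rfl⟩
    refine ⟨algebraMap K (v.adicCompletion K) z, ?_⟩
    exact ((algebraMap K (v.adicCompletion K)).map_frobenius p z).symm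
  have hbM : b ∈ M := ⟨y, by rw [frobenius_def, ← hy]⟩
  obtain ⟨π, hπ⟩ := v.valuation_exists_uniformizer K
  have hπM : π ∉ M := by
    rintro ⟨σ, hσ⟩
    have hval : (Valued.v σ) ^ p
        = ((Multiplicative.ofAdd (-1 : ℤ) : Multiplicative ℤ) : WithZero (Multiplicative ℤ)) := by
      rw [← map_pow, ← frobenius_def, hσ]
      have : (algebraMap K (v.adicCompletion K)) π = (π : v.adicCompletion K) := rfl
      rw [this, v.valuedAdicCompletion_eq_valuation' π, hπ]
      rfl
    have hσ0 : Valued.v σ ≠ (0 : WithZero (Multiplicative ℤ)) := by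
      intro h0
      rw [h0, zero_pow hp.ne_zero] at hval
      exact WithZero.zero_ne_coe hval
    obtain ⟨m, hm⟩ := WithZero.ne_zero_iff_exists.mp hσ0
    rw [← hm, ← WithZero.coe_pow, WithZero.coe_inj] at hval
    have hadd : (p : ℤ) * m.toAdd = -1 := by
      have := congrArg Multiplicative.toAdd hval
      rwa [toAdd_pow, nsmul_eq_mul] at this
    have hdvd1 : (p : ℤ) ∣ 1 := (dvd_neg).mp ⟨m.toAdd, hadd.symm⟩
    have : (p : ℕ) ∣ 1 := by exact_mod_cast Int.natCast_dvd_natCast.mp (by exact_mod_cast hdvd1)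
    exact hp.ne_one (Nat.dvd_one.mp this)
  set M' : IntermediateField E K := subfieldToIF E M hEM with hM'def
  have hfinrank : Module.finrank E K = p := by
    haveI : CharP (RatFunc Fq) p := (Algebra.charP_iff (RatFunc Fq) K p).mpr ‹CharP K p›
    haveI : CharP Fq p := (Algebra.charP_iff Fq K p).mpr ‹CharP K p›
    exact (frob_finrank_eq p (RatFunc Fq) K).trans (ratfunc_frob_finrank p hp Fq)
  haveI : FiniteDimensional E K := FiniteDimensional.of_finrank_pos (hfinrank ▸ hp.pos)
  have htower : Module.finrank E M' * Module.finrank M' K = p := by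
    rw [← hfinrank]; exact Module.finrank_mul_finrank E M' K
  have hdvd : Module.finrank E M' ∣ p := ⟨_, htower.symm⟩
  rcases hp.eq_one_or_self_of_dvd _ hdvd with h1 | hp'
  · have hbot : M' = ⊥ := IntermediateField.finrank_eq_one_iff.mp h1
    have hbbot : b ∈ (⊥ : IntermediateField E K) := hbot ▸ hbM
    rw [IntermediateField.mem_bot] at hbbot
    obtain ⟨e, he⟩ := hbbot
    obtain ⟨c, hc⟩ := e.2
    exact ⟨c, by rw [← he]; exact hc.symm⟩
  · exfalso
    have hM'top : M' = ⊤ := by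
      apply IntermediateField.eq_of_le_of_finrank_eq le_top
      rw [hp', IntermediateField.finrank_top', hfinrank]
    have : π ∈ M' := hM'top ▸ IntermediateField.mem_top
    exact hπM this
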